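/- arXiv:cs/0505005 — 2 statements merged into one kernel-verified Lean document; each statement's English description precedes it below -/
import Mathlib

section
/- Let d ≥ 1, let V be a finite set of d-dimensional boxes with widths w_i(v) > 0, and let h_1, …, h_d be container sizes. Suppose G_1 = (V, E_1), …, G_d = (V, E_d) is a packing class, i.e.: each G_i is an interval graph; for every independent set S of G_i one has ∑_{v ∈ S} w_i(v) ≤ h_i; and E_1 ∩ … ∩ E_d = ∅. Then there exists a feasible orthogonal packing of the boxes V into the container of sizes h_1, …, h_d. -/
/-- A feasible orthogonal packing of `d`-dimensional boxes with widths `w i v` into a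
container of sizes `h i`. -/
def IsFeasiblePacking {d : ℕ} {V : Type*} (w : Fin d → V → ℝ) (h : Fin d → ℝ)
    (x : Fin d → V → ℝ) : Prop :=
  (∀ i v, 0 ≤ x i v ∧ x i v + w i v ≤ h i) ∧
  ∀ u v : V, u ≠ v →
    Disjoint {p : Fin d → ℝ | ∀ i, p i ∈ Set.Ioo (x i u) (x i u + w i u)}
             {p : Fin d → ℝ | ∀ i, p i ∈ Set.Ioo (x i v) (x i v + w i v)}

/-- A simple graph is an interval graph if its vertices can be represented by nonempty
real intervals so that distinct vertices are adjacent iff their intervals intersect. -/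
def IsIntervalGraph {V : Type*} (G : SimpleGraph V) : Prop :=
  ∃ I : V → Set ℝ, (∀ v, (I v).Nonempty) ∧ (∀ v, (I v).OrdConnected) ∧
    ∀ u v : V, u ≠ v → (G.Adj u v ↔ (I u ∩ I v).Nonempty)

private lemma oneDim {V : Type*} [Fintype V] (G : SimpleGraph V) (w : V → ℝ)
    (hw : ∀ v, 0 < w v) (h : ℝ) (hI : IsIntervalGraph G)
    (hS : ∀ S : Finset V, (∀ u ∈ S, ∀ v ∈ S, u ≠ v → ¬ G.Adj u v) → ∑ v ∈ S, w v ≤ h) :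
    ∃ x : V → ℝ, (∀ v, 0 ≤ x v ∧ x v + w v ≤ h) ∧
      ∀ u v, u ≠ v → ¬ G.Adj u v → x u + w u ≤ x v ∨ x v + w v ≤ x u := by
  classical
  obtain ⟨I, hne, hconn, hadj⟩ := hI
  set r : V → V → Prop := fun u v => ∀ a ∈ I u, ∀ b ∈ I v, a < b with hr
  have rne : ∀ u v, r u v → u ≠ v := by
    rintro u v hruv rfl
    obtain ⟨a, ha⟩ := hne u
    exact lt_irrefl a (hruv a ha a ha)
  have rnadj : ∀ u v, r u v → ¬ G.Adj u v := by
    intro u v hruv hAdj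
    obtain ⟨c, hcu, hcv⟩ := (hadj u v (rne u v hruv)).1 hAdj
    exact lt_irrefl c (hruv c hcu c hcv)
  have rtrans : ∀ u v x, r u v → r v x → r u x := by
    intro u v x h1 h2 a ha b hb
    obtain ⟨c, hc⟩ := hne v
    exact lt_trans (h1 a ha c hc) (h2 c hc b hb)
  have rtot : ∀ u v, u ≠ v → ¬ G.Adj u v → r u v ∨ r v u := by
    intro u v huv hAdj
    by_contra hc
    push_neg at hc
    obtain ⟨h1, h2⟩ := hc
    simp only [hr] at h1 h2
    push_neg at h1 h2
    obtain ⟨a, ha, b, hb, hba⟩ := h1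
    obtain ⟨b', hb', a', ha', ha'b'⟩ := h2
    -- a ∈ I u, b ∈ I v, b ≤ a;  b' ∈ I v, a' ∈ I u, a' ≤ b'
    have : (I u ∩ I v).Nonempty := by
      rcases le_or_gt b a' with hba' | hab'
      · exact ⟨a', ha', (hconn v).out hb hb' ⟨hba', ha'b'⟩⟩
      · exact ⟨b, (hconn u).out ha' ha ⟨le_of_lt hab', hba⟩, hb⟩
    exact hAdj ((hadj u v huv).2 this)
  -- chains strictly below v
  set C : V → Finset (Finset V) := fun v => Finset.univ.powerset.filter
    (fun S => (∀ a ∈ S, ∀ b ∈ S, a ≠ b → r a b ∨ r b a) ∧ ∀ a ∈ S, r a v) with hC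
  have hCne : ∀ v, (C v).Nonempty := by
    intro v
    refine ⟨∅, ?_⟩
    simp [hC]
  set x : V → ℝ := fun v => (C v).sup' (hCne v) (fun S => ∑ a ∈ S, w a) with hx
  have hchain_indep : ∀ v : V, ∀ S ∈ C v,
      ∀ a ∈ insert v S, ∀ b ∈ insert v S, a ≠ b → ¬ G.Adj a b := by
    intro v S hSC a ha b hb hab
    simp only [hC, Finset.mem_filter] at hSC
    obtain ⟨-, hpair, hbelow⟩ := hSC
    simp only [Finset.mem_insert] at ha hb
    rcases ha with rfl | ha
    · rcases hb with rfl | hb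
      · exact absurd rfl hab
      · intro hAdj
        exact rnadj b a (hbelow b hb) hAdj.symm
    · rcases hb with rfl | hb
      · exact rnadj a b (hbelow a ha)
      · rcases hpair a ha b hb hab with hr' | hr'
        · exact rnadj a b hr'
        · intro hAdj; exact rnadj b a hr' hAdj.symm
  have hvnot : ∀ v : V, ∀ S ∈ C v, v ∉ S := by
    intro v S hSC hvS
    simp only [hC, Finset.mem_filter] at hSC
    exact rne v v (hSC.2.2 v hvS) rfl
  refine ⟨x, ?_, ?_⟩
  · intro v
    constructor
    · have hmem : (∅ : Finset V) ∈ C v := by simp [hC]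
      have := Finset.le_sup' (fun S => ∑ a ∈ S, w a) hmem
      simpa only [Finset.sum_empty] using this
    · have hle : x v ≤ h - w v := Finset.sup'_le _ _ (fun S hSC => by
        have hind := hchain_indep v S hSC
        have hsum := hS (insert v S) hind
        rw [Finset.sum_insert (hvnot v S hSC)] at hsum
        linarith)
      linarith
  · intro u v huv hAdj
    have key : ∀ u v, r u v → x u + w u ≤ x v := by
      intro u v hruv
      have hxle : ∀ v' : V, ∀ S ∈ C v', ∑ a ∈ S, w a ≤ x v' :=
        fun v' S hSC => Finset.le_sup' (fun S => ∑ a ∈ S, w a) hSC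
      have : x u ≤ x v - w u := Finset.sup'_le _ _ (fun S hSC => by
        have hmem : insert u S ∈ C v := by
          simp only [hC, Finset.mem_filter] at hSC ⊢
          obtain ⟨-, hpair, hbelow⟩ := hSC
          refine ⟨Finset.mem_powerset.2 (Finset.subset_univ _), ?_, ?_⟩
          · intro a ha b hb hab
            simp only [Finset.mem_insert] at ha hb
            rcases ha with rfl | ha
            · rcases hb with rfl | hb
              · exact absurd rfl hab
              · exact Or.inr (hbelow b hb)
            · rcases hb with rfl | hb
              · exact Or.inl (hbelow a ha)
              · exact hpair a ha b hb hab
          · intro a ha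
            simp only [Finset.mem_insert] at ha
            rcases ha with rfl | ha
            · exact hruv
            · exact rtrans a u v (hbelow a ha) hruv
        have hunot : u ∉ S := hvnot u S hSC
        have h2 := hxle v (insert u S) hmem
        rw [Finset.sum_insert hunot] at h2
        linarith)
      linarith
    rcases rtot u v huv hAdj with hr' | hr'
    · exact Or.inl (key u v hr')
    · exact Or.inr (key v u hr')

/-- Sufficiency direction of the theorem of Fekete and Schepers: any packing class
(a `d`-tuple of graphs satisfying C1, C2, C3) gives rise to a feasible packing. -/
theorem packing_class_gives_feasible_packing
    {d : ℕ} (hd : 1 ≤ d) {V : Type*} [Fintype V]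
    (w : Fin d → V → ℝ) (hw : ∀ i v, 0 < w i v) (h : Fin d → ℝ)
    (G : Fin d → SimpleGraph V)
    (hC1 : ∀ i, IsIntervalGraph (G i))
    (hC2 : ∀ i : Fin d, ∀ S : Finset V,
      (∀ u ∈ S, ∀ v ∈ S, u ≠ v → ¬ (G i).Adj u v) → ∑ v ∈ S, w i v ≤ h i)
    (hC3 : (⋂ i, (G i).edgeSet) = ∅) :
    ∃ x : Fin d → V → ℝ, IsFeasiblePacking w h x := by
  classical
  choose x hx1 hx2 using fun i => oneDim (G i) (w i) (hw i) (h i) (hC1 i) (hC2 i)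
  refine ⟨x, fun i v => hx1 i v, ?_⟩
  intro u v huv
  have hex : ∃ i, ¬ (G i).Adj u v := by
    by_contra hc
    push_neg at hc
    have hmem : s(u, v) ∈ ⋂ i, (G i).edgeSet :=
      Set.mem_iInter.2 fun i => (SimpleGraph.mem_edgeSet (G i)).2 (hc i)
    rw [hC3] at hmem
    exact hmem
  obtain ⟨i, hi⟩ := hex
  rw [Set.disjoint_left]
  intro p hp hq
  have h1 := hp i
  have h2 := hq i
  simp only [Set.mem_Ioo] at h1 h2
  rcases hx2 i u v huv hi with hle | hle
  · linarith [h1.1, h1.2, h2.1, h2.2]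
  · linarith [h1.1, h1.2, h2.1, h2.2]
end

section
/- A finite simple graph G is an interval graph if and only if its complement admits a transitive orientation and G contains no induced chordless cycle of length 4. -/
/-- A graph `H` admits a transitive orientation if each edge can be assigned a
direction so that the resulting relation is transitive. -/
def HasTransitiveOrientation {V : Type*} (H : SimpleGraph V) : Prop :=
  ∃ r : V → V → Prop,
    (∀ u v : V, H.Adj u v ↔ (r u v ∨ r v u)) ∧
    (∀ u v : V, r u v → ¬ r v u) ∧
    Transitive r

/-- `G` contains an induced chordless cycle of length 4: four vertices `a b c d` with
`ab, bc, cd, da` edges and `ac, bd` non-edges. -/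
def HasInducedC4 {V : Type*} (G : SimpleGraph V) : Prop :=
  ∃ a b c d : V, a ≠ c ∧ b ≠ d ∧
    G.Adj a b ∧ G.Adj b c ∧ G.Adj c d ∧ G.Adj d a ∧ ¬ G.Adj a c ∧ ¬ G.Adj b d

/-- Two disjoint nonempty order-connected subsets of `ℝ` are completely separated:
one lies entirely to the left of the other. -/
lemma ordConnected_disjoint_lt {s t : Set ℝ} (hs : s.OrdConnected) (ht : t.OrdConnected)
    (hd : ∀ x, x ∈ s → x ∉ t) :
    (∀ x ∈ s, ∀ y ∈ t, x < y) ∨ (∀ x ∈ t, ∀ y ∈ s, x < y) := by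
  by_contra h
  push_neg at h
  obtain ⟨⟨x, hx, y, hy, hyx⟩, ⟨y', hy', x', hx', hx'y'⟩⟩ := h
  rcases le_total x' y with h1 | h1
  · exact hd y (hs.out hx' hx ⟨h1, hyx⟩) hy
  · exact hd x' hx' (ht.out hy hy' ⟨h1, hx'y'⟩)

/-- Every clique in a finite graph extends to a maximal clique. -/
lemma exists_maximal_clique {V : Type*} [Fintype V] (G : SimpleGraph V) (s : Finset V)
    (hs : G.IsClique ↑s) :
    ∃ m : Finset V, G.IsClique ↑m ∧ s ⊆ m ∧
      ∀ t : Finset V, G.IsClique ↑t → m ⊆ t → m = t := by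
  classical
  obtain ⟨m, hm, hmax⟩ := Finset.exists_max_image
    (Finset.univ.filter (fun t : Finset V => G.IsClique ↑t ∧ s ⊆ t)) Finset.card
    ⟨s, by simp [hs]⟩
  rw [Finset.mem_filter] at hm
  refine ⟨m, hm.2.1, hm.2.2, fun t ht hmt => ?_⟩
  have htm := hmax t (Finset.mem_filter.mpr ⟨Finset.mem_univ t, ht, hm.2.2.trans hmt⟩)
  exact Finset.eq_of_subset_of_card_le hmt htm

/-- Key direction-flipping lemma: if `r` transitively orients `Gᶜ`, `G` is C4-free,
`a, a'` lie in a common clique, `b, b'` lie in a common clique, and `r a b`, then any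
complement edge `a'b'` is also oriented from `a'` to `b'`. -/
lemma flip_lemma {V : Type*} (G : SimpleGraph V) (r : V → V → Prop)
    (hor : ∀ u v, Gᶜ.Adj u v ↔ (r u v ∨ r v u))
    (hasym : ∀ u v, r u v → ¬ r v u) (htr : Transitive r)
    (hC4 : ¬ HasInducedC4 G)
    {a a' b b' : V}
    (haa' : a = a' ∨ G.Adj a a') (hbb' : b = b' ∨ G.Adj b b')
    (hab : r a b) (hne : a' ≠ b') (hnadj : ¬ G.Adj a' b') : r a' b' := by
  have rprop : ∀ {u v : V}, r u v → u ≠ v ∧ ¬ G.Adj u v := by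
    intro u v h
    have h2 := (hor u v).mpr (Or.inl h)
    rw [SimpleGraph.compl_adj] at h2
    exact h2
  have hc : Gᶜ.Adj a' b' := by rw [SimpleGraph.compl_adj]; exact ⟨hne, hnadj⟩
  rcases (hor a' b').mp hc with h | h
  · exact h
  exfalso
  rcases haa' with rfl | haa' <;> rcases hbb' with rfl | hbb'
  · exact hasym _ _ hab h
  · exact (rprop (htr h hab)).2 hbb'.symm
  · exact (rprop (htr hab h)).2 haa'
  · have hab' : G.Adj a b' := by
      by_contra hn
      have hne2 : a ≠ b' := by
        rintro rfl
        exact (rprop h).2 haa'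
      have hc2 : Gᶜ.Adj a b' := by rw [SimpleGraph.compl_adj]; exact ⟨hne2, hn⟩
      rcases (hor a b').mp hc2 with h1 | h1
      · exact (rprop (htr h1 h)).2 haa'
      · exact (rprop (htr h1 hab)).2 hbb'.symm
    have ha'b : G.Adj a' b := by
      by_contra hn
      have hne2 : a' ≠ b := by
        rintro rfl
        exact (rprop h).2 hbb'.symm
      have hc2 : Gᶜ.Adj a' b := by rw [SimpleGraph.compl_adj]; exact ⟨hne2, hn⟩
      rcases (hor a' b).mp hc2 with h1 | h1
      · exact (rprop (htr h h1)).2 hbb'.symm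
      · exact (rprop (htr hab h1)).2 haa'
    exact hC4 ⟨a, a', b, b', (rprop hab).1, hne, haa', ha'b, hbb', hab'.symm,
      (rprop hab).2, hnadj⟩

/-- Gilmore–Hoffman / Ghouila-Houri characterization: a finite simple graph is an
interval graph iff its complement admits a transitive orientation and the graph
contains no induced chordless cycle of length 4. -/
theorem intervalGraph_iff_complement_transitively_orientable_and_C4_free
    {V : Type*} [Fintype V] (G : SimpleGraph V) :
    IsIntervalGraph G ↔ HasTransitiveOrientation Gᶜ ∧ ¬ HasInducedC4 G := by
  classical
  constructor
  · rintro ⟨I, hne0, hoc, hiff⟩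
    have hdisj : ∀ {u v : V}, u ≠ v → ¬ G.Adj u v → ∀ x ∈ I u, x ∉ I v := by
      intro u v huv hn x hx hx'
      exact hn ((hiff u v huv).mpr ⟨x, hx, hx'⟩)
    constructor
    · refine ⟨fun u v => u ≠ v ∧ ¬ G.Adj u v ∧ ∀ x ∈ I u, ∀ y ∈ I v, x < y, ?_, ?_, ?_⟩
      · intro u v
        rw [SimpleGraph.compl_adj]
        constructor
        · rintro ⟨huv, hn⟩
          rcases ordConnected_disjoint_lt (hoc u) (hoc v) (hdisj huv hn) with h | h
          · exact Or.inl ⟨huv, hn, h⟩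
          · exact Or.inr ⟨huv.symm, fun h' => hn h'.symm, h⟩
        · rintro (⟨huv, hn, -⟩ | ⟨huv, hn, -⟩)
          · exact ⟨huv, hn⟩
          · exact ⟨huv.symm, fun h => hn h.symm⟩
      · rintro u v ⟨huv, hn, hlt⟩ ⟨-, -, hlt'⟩
        obtain ⟨x, hx⟩ := hne0 u
        obtain ⟨y, hy⟩ := hne0 v
        exact lt_irrefl x ((hlt x hx y hy).trans (hlt' y hy x hx))
      · rintro u v w ⟨huv, hnuv, h1⟩ ⟨hvw, hnvw, h2⟩
        obtain ⟨y, hy⟩ := hne0 v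
        have huw : u ≠ w := by
          rintro rfl
          obtain ⟨x, hx⟩ := hne0 u
          exact lt_irrefl x ((h1 x hx y hy).trans (h2 y hy x hx))
        refine ⟨huw, ?_, ?_⟩
        · intro hadj
          obtain ⟨z, hz1, hz2⟩ := (hiff u w huw).mp hadj
          exact lt_irrefl z ((h1 z hz1 y hy).trans (h2 y hy z hz2))
        · intro x hx z hz
          exact (h1 x hx y hy).trans (h2 y hy z hz)
    · rintro ⟨a, b, c, d, hac, hbd, hab, hbc, hcd, hda, hnac, hnbd⟩
      obtain ⟨p, hpa, hpb⟩ := (hiff a b hab.ne).mp hab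
      obtain ⟨q, hqb, hqc⟩ := (hiff b c hbc.ne).mp hbc
      obtain ⟨t, htc, htd⟩ := (hiff c d hcd.ne).mp hcd
      obtain ⟨s, hsd, hsa⟩ := (hiff d a hda.ne).mp hda
      rcases ordConnected_disjoint_lt (hoc a) (hoc c) (hdisj hac hnac) with h1 | h1 <;>
        rcases ordConnected_disjoint_lt (hoc b) (hoc d) (hdisj hbd hnbd) with h2 | h2
      · exact lt_irrefl s ((h1 s hsa q hqc).trans (h2 q hqb s hsd))
      · exact lt_irrefl p ((h1 p hpa t htc).trans (h2 t htd p hpb))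
      · exact lt_irrefl t ((h1 t htc p hpa).trans (h2 p hpb t htd))
      · exact lt_irrefl q ((h1 q hqc s hsa).trans (h2 s hsd q hqb))
  · rintro ⟨⟨r, hor, hasym, htr⟩, hC4⟩
    have rprop : ∀ {u v : V}, r u v → u ≠ v ∧ ¬ G.Adj u v := by
      intro u v h
      have h2 := (hor u v).mpr (Or.inl h)
      rw [SimpleGraph.compl_adj] at h2
      exact h2
    -- The type of maximal cliques.
    let MC := {m : Finset V // G.IsClique ↑m ∧
      ∀ t : Finset V, G.IsClique ↑t → m ⊆ t → m = t}
    haveI : Fintype MC := Fintype.ofFinite MC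
    have hclq : ∀ (m : MC) {x y : V}, x ∈ m.1 → y ∈ m.1 → x = y ∨ G.Adj x y := by
      intro m x y hx hy
      by_cases h : x = y
      · exact Or.inl h
      · exact Or.inr (m.2.1 (Finset.mem_coe.mpr hx) (Finset.mem_coe.mpr hy) h)
    -- The order on maximal cliques.
    let rel : MC → MC → Prop := fun m n => ∃ a ∈ m.1, ∃ b ∈ n.1, r a b
    have rel_all : ∀ {m n : MC}, rel m n → ∀ {a b : V}, a ∈ m.1 → b ∈ n.1 →
        a ≠ b → ¬ G.Adj a b → r a b := by
      rintro m n ⟨x, hx, y, hy, hxy⟩ a b ha hb hab hnadj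
      exact flip_lemma G r hor hasym htr hC4 (hclq m hx ha) (hclq n hy hb) hxy hab hnadj
    have rel_irrefl : ∀ m : MC, ¬ rel m m := by
      rintro m ⟨x, hx, y, hy, hxy⟩
      obtain ⟨hne, hnadj⟩ := rprop hxy
      rcases hclq m hx hy with h | h
      exacts [hne h, hnadj h]
    have rel_trans : ∀ {m n p : MC}, rel m n → rel n p → rel m p := by
      rintro m n p ⟨a, ha, b, hb, hab⟩ ⟨b', hb', c, hc, hb'c⟩
      have hac_ne : a ≠ c := by
        rintro rfl
        have h1 := rprop (htr hb'c hab)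
        rcases hclq n hb' hb with h | h
        exacts [h1.1 h, h1.2 h]
      have hac_nadj : ¬ G.Adj a c := by
        intro hadjac
        rcases hclq' : (em (a = b')) with hb'a | hab'ne
        · subst hb'a
          exact (rprop hb'c).2 hadjac
        · by_cases hab' : G.Adj a b'
          · by_cases hbc : b = c
            · subst hbc
              exact (rprop hab).2 hadjac
            · by_cases hbcadj : G.Adj b c
              · -- build a C4 on a, b', b, c
                have hbb'ne : b ≠ b' := by
                  rintro rfl
                  exact (rprop hb'c).2 hbcadj
                have hbb' : G.Adj b' b := by
                  rcases hclq n hb' hb with h | h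
                  exacts [absurd h.symm hbb'ne, h]
                exact hC4 ⟨a, b', b, c, (rprop hab).1, (rprop hb'c).1, hab', hbb',
                  hbcadj, hadjac.symm, (rprop hab).2, (rprop hb'c).2⟩
              · -- flip on cliques n, p gives r b c
                have hrb : r b c := flip_lemma G r hor hasym htr hC4
                  (hclq n hb' hb) (Or.inl rfl) hb'c hbc hbcadj
                exact (rprop (htr hab hrb)).2 hadjac
          · -- flip on cliques m, n gives r a b'
            have hrb : r a b' := flip_lemma G r hor hasym htr hC4
              (Or.inl rfl) (hclq n hb hb') hab hab'ne hab'
            exact (rprop (htr hrb hb'c)).2 hadjac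
      have hcadj : Gᶜ.Adj a c := by rw [SimpleGraph.compl_adj]; exact ⟨hac_ne, hac_nadj⟩
      rcases (hor a c).mp hcadj with h | h
      · exact ⟨a, ha, c, hc, h⟩
      · exfalso
        have h1 := rprop (htr (htr hb'c h) hab)
        rcases hclq n hb' hb with h2 | h2
        exacts [h1.1 h2, h1.2 h2]
    have rel_total : ∀ m n : MC, m ≠ n → rel m n ∨ rel n m := by
      intro m n hmn
      have hsub : ¬ m.1 ⊆ n.1 := by
        intro h
        exact hmn (Subtype.ext (m.2.2 n.1 n.2.1 h))
      obtain ⟨a, ham, han⟩ := Finset.not_subset.mp hsub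
      by_contra hcon
      push_neg at hcon
      have hcl : G.IsClique ↑(insert a n.1) := by
        rw [Finset.coe_insert]
        apply n.2.1.insert
        intro b hb hba
        by_contra hnadj
        have hcadj : Gᶜ.Adj a b := by rw [SimpleGraph.compl_adj]; exact ⟨hba, hnadj⟩
        rcases (hor a b).mp hcadj with h | h
        · exact hcon.1 ⟨a, ham, b, Finset.mem_coe.mp hb, h⟩
        · exact hcon.2 ⟨b, Finset.mem_coe.mp hb, a, ham, h⟩
      have := n.2.2 (insert a n.1) hcl (Finset.subset_insert a n.1)
      exact han (this ▸ Finset.mem_insert_self a n.1)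
    -- A real-valued rank function compatible with rel.
    let f : MC → ℝ := fun m => ((Finset.univ.filter (fun p => rel p m)).card : ℝ)
    have hf : ∀ {m n : MC}, rel m n → f m < f n := by
      intro m n hmn
      have hsubset : Finset.univ.filter (fun p => rel p m) ⊆
          Finset.univ.filter (fun p => rel p n) := by
        intro p hp
        rw [Finset.mem_filter] at *
        exact ⟨Finset.mem_univ p, rel_trans hp.2 hmn⟩
      have hss : Finset.univ.filter (fun p => rel p m) ⊂
          Finset.univ.filter (fun p => rel p n) := by
        refine (Finset.ssubset_iff_of_subset hsubset).mpr
          ⟨m, Finset.mem_filter.mpr ⟨Finset.mem_univ m, hmn⟩, fun hmem => ?_⟩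
        exact rel_irrefl m (Finset.mem_filter.mp hmem).2
      show ((Finset.univ.filter (fun p => rel p m)).card : ℝ) <
        ((Finset.univ.filter (fun p => rel p n)).card : ℝ)
      exact_mod_cast Finset.card_lt_card hss
    -- Every vertex lies in some maximal clique.
    have hvm : ∀ v : V, ∃ m : MC, v ∈ m.1 := by
      intro v
      obtain ⟨m, h1, h2, h3⟩ := exists_maximal_clique G {v} (by simp)
      exact ⟨⟨m, h1, h3⟩, h2 (Finset.mem_singleton_self v)⟩
    -- The interval representation.
    let S : V → Finset ℝ := fun v => (Finset.univ.filter (fun m : MC => v ∈ m.1)).image f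
    have hSne : ∀ v, (S v).Nonempty := by
      intro v
      obtain ⟨m, hm⟩ := hvm v
      exact ⟨f m, Finset.mem_image_of_mem f (Finset.mem_filter.mpr ⟨Finset.mem_univ m, hm⟩)⟩
    refine ⟨fun v => Set.Icc ((S v).min' (hSne v)) ((S v).max' (hSne v)), ?_, ?_, ?_⟩
    · intro v
      exact Set.nonempty_Icc.mpr (Finset.min'_le _ _ (Finset.max'_mem _ _))
    · intro v
      exact Set.ordConnected_Icc
    · intro u v huv
      constructor
      · intro hadj
        have hcl : G.IsClique ↑({u, v} : Finset V) := by
          rw [Finset.coe_insert, Finset.coe_singleton]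
          exact SimpleGraph.isClique_pair.mpr fun _ => hadj
        obtain ⟨m, h1, h2, h3⟩ := exists_maximal_clique G {u, v} hcl
        have hu : u ∈ m := h2 (by simp)
        have hv : v ∈ m := h2 (by simp)
        have hmu : f ⟨m, h1, h3⟩ ∈ S u :=
          Finset.mem_image_of_mem f (Finset.mem_filter.mpr ⟨Finset.mem_univ _, hu⟩)
        have hmv : f ⟨m, h1, h3⟩ ∈ S v :=
          Finset.mem_image_of_mem f (Finset.mem_filter.mpr ⟨Finset.mem_univ _, hv⟩)
        exact ⟨f ⟨m, h1, h3⟩, ⟨Finset.min'_le _ _ hmu, Finset.le_max' _ _ hmu⟩,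
          ⟨Finset.min'_le _ _ hmv, Finset.le_max' _ _ hmv⟩⟩
      · rintro ⟨x, hxu, hxv⟩
        by_contra hnadj
        have key : ∀ {w z : V}, r w z → (S w).max' (hSne w) < (S z).min' (hSne z) := by
          intro w z hwz
          rw [Finset.max'_lt_iff]
          intro α hα
          rw [Finset.lt_min'_iff]
          intro β hβ
          obtain ⟨m, hm, rfl⟩ := Finset.mem_image.mp hα
          obtain ⟨n, hn, rfl⟩ := Finset.mem_image.mp hβ
          exact hf ⟨w, (Finset.mem_filter.mp hm).2, z, (Finset.mem_filter.mp hn).2, hwz⟩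
        have hcadj : Gᶜ.Adj u v := by rw [SimpleGraph.compl_adj]; exact ⟨huv, hnadj⟩
        rcases (hor u v).mp hcadj with h | h
        · exact absurd ((hxu.2.trans_lt (key h)).trans_le hxv.1) (lt_irrefl x)
        · exact absurd ((hxv.2.trans_lt (key h)).trans_le hxu.1) (lt_irrefl x)
end
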